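/- Let X be a doubling metric space and Φ₁, Φ₂ dimension functions with Φ₁(x)/Φ₂(x) → 1 as x → 0. Then for every set E ⊆ X, the upper Φ₁-dimension of E equals the upper Φ₂-dimension of E, and the lower Φ₁-dimension of E equals the lower Φ₂-dimension of E. -/

import Mathlib

open Set Metric Filter Topology
open scoped ENNReal

noncomputable section

/-- The least number of closed balls of radius `r` needed to cover `E`
(`∞` if there is no finite cover). -/
def coverNumber {X : Type*} [PseudoMetricSpace X] (r : ℝ) (E : Set X) : ℝ≥0∞ :=
  ⨅ (s : Finset X) (_ : E ⊆ ⋃ x ∈ s, closedBall x r), (s.card : ℝ≥0∞)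

/-- `Φ : (0,1) → [0,∞)` is a dimension function if `x ^ (1 + Φ x)` decreases to `0`
as `x` decreases to `0`. -/
def IsDimensionFunction (Φ : ℝ → ℝ) : Prop :=
  (∀ x ∈ Ioo (0:ℝ) 1, 0 ≤ Φ x) ∧
  (∀ x ∈ Ioo (0:ℝ) 1, ∀ y ∈ Ioo (0:ℝ) 1, x ≤ y → x ^ (1 + Φ x) ≤ y ^ (1 + Φ y)) ∧
  Tendsto (fun x : ℝ => x ^ (1 + Φ x)) (nhdsWithin 0 (Ioo 0 1)) (nhds 0)

/-- A metric space is doubling if there is `M ≥ 1` such that every closed ball of radius `R`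
can be covered by at most `M` closed balls of radius `R / 2`. -/
def IsDoublingSpace (X : Type*) [PseudoMetricSpace X] : Prop :=
  ∃ M : ℕ, 1 ≤ M ∧ ∀ (x : X) (R : ℝ), ∃ s : Finset X, s.card ≤ M ∧
    closedBall x R ⊆ ⋃ y ∈ s, closedBall y (R / 2)

/-- The upper `Φ`-dimension. -/
def upperPhiDim {X : Type*} [PseudoMetricSpace X] (Φ : ℝ → ℝ) (E : Set X) : ℝ :=
  sInf {α : ℝ | ∃ c₁ > (0:ℝ), ∃ c₂ > (0:ℝ), ∀ r R : ℝ,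
    0 < r → r ≤ R ^ (1 + Φ R) → R ^ (1 + Φ R) ≤ R → R < c₁ → ∀ z ∈ E,
      coverNumber r (closedBall z R ∩ E) ≤ ENNReal.ofReal (c₂ * (R / r) ^ α)}

/-- The lower `Φ`-dimension. -/
def lowerPhiDim {X : Type*} [PseudoMetricSpace X] (Φ : ℝ → ℝ) (E : Set X) : ℝ :=
  sSup {α : ℝ | ∃ c₁ > (0:ℝ), ∃ c₂ > (0:ℝ), ∀ r R : ℝ,
    0 < r → r ≤ R ^ (1 + Φ R) → R ^ (1 + Φ R) ≤ R → R < c₁ → ∀ z ∈ E,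
      ENNReal.ofReal (c₂ * (R / r) ^ α) ≤ coverNumber r (closedBall z R ∩ E)}

/-- The (upper) Assouad dimension: the upper `Φ`-dimension with `Φ ≡ 0`. -/
def assouadDim {X : Type*} [PseudoMetricSpace X] (E : Set X) : ℝ :=
  upperPhiDim (fun _ => 0) E

/-- The lower Assouad dimension: the lower `Φ`-dimension with `Φ ≡ 0`. -/
def lowerAssouadDim {X : Type*} [PseudoMetricSpace X] (E : Set X) : ℝ :=
  lowerPhiDim (fun _ => 0) E

/-- The upper `θ`-Assouad spectrum: the upper `Φ`-dimension with constant `Φ = 1/θ - 1`. -/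
def upperAssouadSpectrum {X : Type*} [PseudoMetricSpace X] (θ : ℝ) (E : Set X) : ℝ :=
  upperPhiDim (fun _ => 1 / θ - 1) E

/-- The lower `θ`-Assouad spectrum: the lower `Φ`-dimension with constant `Φ = 1/θ - 1`. -/
def lowerAssouadSpectrum {X : Type*} [PseudoMetricSpace X] (θ : ℝ) (E : Set X) : ℝ :=
  lowerPhiDim (fun _ => 1 / θ - 1) E

/-- The upper quasi-Assouad dimension, `lim_{θ → 1}` of the upper `θ`-Assouad spectrum;
since the upper spectrum is nondecreasing in `θ`, this limit is the supremum over
`θ ∈ (0,1)`. -/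
def quasiAssouadDim {X : Type*} [PseudoMetricSpace X] (E : Set X) : ℝ :=
  ⨆ θ : Ioo (0:ℝ) 1, upperAssouadSpectrum (θ : ℝ) E

/-- The lower quasi-Assouad dimension, `lim_{θ → 1}` of the lower `θ`-Assouad spectrum;
since the lower spectrum is nonincreasing in `θ`, this limit is the infimum over
`θ ∈ (0,1)`. -/
def quasiLowerAssouadDim {X : Type*} [PseudoMetricSpace X] (E : Set X) : ℝ :=
  ⨅ θ : Ioo (0:ℝ) 1, lowerAssouadSpectrum (θ : ℝ) E

/-- Upper box dimension `limsup_{r → 0} log N_r(E) / |log r|`. -/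
def upperBoxDim {X : Type*} [PseudoMetricSpace X] (E : Set X) : ℝ :=
  limsup (fun r : ℝ => Real.log (coverNumber r E).toReal / |Real.log r|)
    (nhdsWithin 0 (Ioo 0 1))

/-- Lower box dimension `liminf_{r → 0} log N_r(E) / |log r|`. -/
def lowerBoxDim {X : Type*} [PseudoMetricSpace X] (E : Set X) : ℝ :=
  liminf (fun r : ℝ => Real.log (coverNumber r E).toReal / |Real.log r|)
    (nhdsWithin 0 (Ioo 0 1))


namespace PhiAux
variable {X : Type*} [PseudoMetricSpace X]

lemma coverNumber_le_card {r : ℝ} {E : Set X} {s : Finset X}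
    (h : E ⊆ ⋃ x ∈ s, closedBall x r) : coverNumber r E ≤ s.card :=
  iInf₂_le s h

lemma coverNumber_mono {r : ℝ} {A B : Set X} (h : A ⊆ B) :
    coverNumber r A ≤ coverNumber r B :=
  le_iInf₂ fun s hs => iInf₂_le s (h.trans hs)

lemma coverNumber_anti {r₁ r₂ : ℝ} (h : r₁ ≤ r₂) (A : Set X) :
    coverNumber r₂ A ≤ coverNumber r₁ A :=
  le_iInf₂ fun s hs => iInf₂_le s
    (hs.trans (Set.iUnion₂_mono fun x _ => closedBall_subset_closedBall h))

lemma one_le_coverNumber {r : ℝ} {A : Set X} (h : A.Nonempty) :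
    1 ≤ coverNumber r A := by
  refine le_iInf₂ fun s hs => ?_
  have : s.Nonempty := by
    rcases h with ⟨a, ha⟩
    rcases Set.mem_iUnion₂.1 (hs ha) with ⟨x, hx, -⟩
    exact ⟨x, hx⟩
  exact_mod_cast Nat.one_le_iff_ne_zero.2 (Finset.card_ne_zero_of_mem this.choose_spec)

lemma exists_cover_of_le {r : ℝ} {A : Set X} {n : ℕ}
    (h : coverNumber r A ≤ n) :
    ∃ s : Finset X, A ⊆ ⋃ x ∈ s, closedBall x r ∧ s.card ≤ n := by
  by_contra hc
  push_neg at hc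
  have : (n : ℝ≥0∞) + 1 ≤ coverNumber r A := by
    refine le_iInf₂ fun s hs => ?_
    have := hc s hs
    exact_mod_cast Nat.succ_le_of_lt this
  have h2 := this.trans h
  have : (n:ℝ≥0∞) < n + 1 := by exact_mod_cast Nat.lt_succ_self n
  exact absurd h2 (not_le.2 this)

end PhiAux

namespace PhiAux
variable {X : Type*} [PseudoMetricSpace X]

lemma logb_swap {a b : ℝ} (ha : 0 < a) (hb : 0 < b) :
    a ^ Real.logb 2 b = b ^ Real.logb 2 a := by
  rw [Real.rpow_def_of_pos ha, Real.rpow_def_of_pos hb, Real.logb, Real.logb]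
  ring_nf

lemma le_two_pow_ceil {q : ℝ} (hq : 1 ≤ q) :
    q ≤ 2 ^ ⌈Real.logb 2 q⌉₊ := by
  have h0 : (0:ℝ) < q := lt_of_lt_of_le one_pos hq
  calc q = (2:ℝ) ^ Real.logb 2 q := (Real.rpow_logb two_pos (by norm_num) h0).symm
    _ ≤ (2:ℝ) ^ ((⌈Real.logb 2 q⌉₊ : ℝ)) :=
        Real.rpow_le_rpow_of_exponent_le one_le_two (Nat.le_ceil _)
    _ = 2 ^ ⌈Real.logb 2 q⌉₊ := by rw [Real.rpow_natCast]

lemma Mpow_ceil_le {M : ℕ} (hM : 1 ≤ M) {q : ℝ} (hq : 1 ≤ q) :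
    ((M:ℝ)) ^ ⌈Real.logb 2 q⌉₊ ≤ (M:ℝ) * q ^ Real.logb 2 M := by
  have h0 : (0:ℝ) < q := lt_of_lt_of_le one_pos hq
  have hM0 : (0:ℝ) < M := by exact_mod_cast Nat.lt_of_lt_of_le Nat.zero_lt_one hM
  have hM1 : (1:ℝ) ≤ M := by exact_mod_cast hM
  have hlogb0 : 0 ≤ Real.logb 2 q := Real.logb_nonneg one_lt_two hq
  calc (M:ℝ) ^ ⌈Real.logb 2 q⌉₊ = (M:ℝ) ^ ((⌈Real.logb 2 q⌉₊ : ℝ)) := by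
        rw [Real.rpow_natCast]
    _ ≤ (M:ℝ) ^ (Real.logb 2 q + 1) :=
        Real.rpow_le_rpow_of_exponent_le hM1 (le_of_lt (Nat.ceil_lt_add_one hlogb0))
    _ = (M:ℝ) ^ Real.logb 2 q * (M:ℝ) := by
        rw [Real.rpow_add hM0, Real.rpow_one]
    _ = (M:ℝ) * q ^ Real.logb 2 M := by rw [logb_swap hM0 h0]; ring

lemma doubling_iter {M : ℕ}
    (hd : ∀ (x : X) (R : ℝ), ∃ s : Finset X, s.card ≤ M ∧
      closedBall x R ⊆ ⋃ y ∈ s, closedBall y (R / 2)) :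
    ∀ (k : ℕ) (x : X) (R : ℝ), ∃ s : Finset X, s.card ≤ M ^ k ∧
      closedBall x R ⊆ ⋃ y ∈ s, closedBall y (R / 2 ^ k) := by
  classical
  intro k
  induction k with
  | zero => intro x R; exact ⟨{x}, by simp, by simp⟩
  | succ k ih =>
    intro x R
    obtain ⟨s, hcard, hcov⟩ := ih x R
    choose t ht1 ht2 using fun y => hd y (R / 2 ^ k)
    refine ⟨s.biUnion t, ?_, ?_⟩
    · calc (s.biUnion t).card ≤ ∑ y ∈ s, (t y).card := Finset.card_biUnion_le
        _ ≤ ∑ _y ∈ s, M := Finset.sum_le_sum fun y _ => ht1 y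
        _ = s.card * M := by rw [Finset.sum_const, smul_eq_mul]
        _ ≤ M ^ k * M := Nat.mul_le_mul_right M hcard
        _ = M ^ (k+1) := by ring
    · intro z hz
      obtain ⟨y, hy, hzy⟩ := Set.mem_iUnion₂.1 (hcov hz)
      obtain ⟨w, hw, hzw⟩ := Set.mem_iUnion₂.1 (ht2 y hzy)
      refine Set.mem_iUnion₂.2 ⟨w, Finset.mem_biUnion.2 ⟨y, hy, hw⟩, ?_⟩
      have : R / 2 ^ k / 2 = R / 2 ^ (k+1) := by ring
      rwa [this] at hzw

/-- Refine a cover by `r`-balls into a cover by `r''`-balls, `0 < r'' ≤ r`. -/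
lemma cover_refine {M : ℕ} (hM : 1 ≤ M)
    (hd : ∀ (x : X) (R : ℝ), ∃ s : Finset X, s.card ≤ M ∧
      closedBall x R ⊆ ⋃ y ∈ s, closedBall y (R / 2))
    {r r'' : ℝ} (h0 : 0 < r'') (hr : r'' ≤ r) (A : Set X) (s : Finset X)
    (hs : A ⊆ ⋃ x ∈ s, closedBall x r) :
    coverNumber r'' A ≤ (s.card : ℝ≥0∞) *
      ENNReal.ofReal ((M:ℝ) * (r / r'') ^ Real.logb 2 M) := by
  classical
  set q := r / r'' with hqdef
  have hq : 1 ≤ q := (one_le_div h0).2 hr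
  set j := ⌈Real.logb 2 q⌉₊ with hjdef
  have hrj : r / 2 ^ j ≤ r'' := by
    rw [div_le_iff₀ (by positivity)]
    calc r = r'' * q := by rw [hqdef]; field_simp
      _ ≤ r'' * 2 ^ j := by
          exact mul_le_mul_of_nonneg_left (le_two_pow_ceil hq) h0.le
  choose t ht1 ht2 using fun x => doubling_iter hd j x r
  have hcov : A ⊆ ⋃ y ∈ s.biUnion t, closedBall y (r / 2 ^ j) := by
    intro z hz
    obtain ⟨x, hx, hzx⟩ := Set.mem_iUnion₂.1 (hs hz)
    obtain ⟨w, hw, hzw⟩ := Set.mem_iUnion₂.1 (ht2 x hzx)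
    exact Set.mem_iUnion₂.2 ⟨w, Finset.mem_biUnion.2 ⟨x, hx, hw⟩, hzw⟩
  have h1 : coverNumber r'' A ≤ ((s.biUnion t).card : ℝ≥0∞) :=
    (coverNumber_anti hrj A).trans (coverNumber_le_card hcov)
  have h2 : (s.biUnion t).card ≤ s.card * M ^ j := by
    calc (s.biUnion t).card ≤ ∑ x ∈ s, (t x).card := Finset.card_biUnion_le
      _ ≤ ∑ _x ∈ s, M ^ j := Finset.sum_le_sum fun x _ => ht1 x
      _ = s.card * M ^ j := by rw [Finset.sum_const, smul_eq_mul]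
  calc coverNumber r'' A ≤ ((s.card * M ^ j : ℕ) : ℝ≥0∞) := h1.trans (by exact_mod_cast h2)
    _ = (s.card : ℝ≥0∞) * ((M ^ j : ℕ) : ℝ≥0∞) := by push_cast; ring
    _ ≤ (s.card : ℝ≥0∞) * ENNReal.ofReal ((M:ℝ) * q ^ Real.logb 2 M) := by
        refine mul_le_mul_right ?_ _
        rw [← ENNReal.ofReal_natCast]
        refine ENNReal.ofReal_le_ofReal ?_
        push_cast
        exact Mpow_ceil_le hM hq

end PhiAux

namespace PhiAux
variable {X : Type*} [PseudoMetricSpace X]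

/-- The defining set of the upper `Φ`-dimension. -/
def USet (Φ : ℝ → ℝ) (E : Set X) : Set ℝ :=
  {α : ℝ | ∃ c₁ > (0:ℝ), ∃ c₂ > (0:ℝ), ∀ r R : ℝ,
    0 < r → r ≤ R ^ (1 + Φ R) → R ^ (1 + Φ R) ≤ R → R < c₁ → ∀ z ∈ E,
      coverNumber r (closedBall z R ∩ E) ≤ ENNReal.ofReal (c₂ * (R / r) ^ α)}

/-- The defining set of the lower `Φ`-dimension. -/
def TSet (Φ : ℝ → ℝ) (E : Set X) : Set ℝ :=
  {α : ℝ | ∃ c₁ > (0:ℝ), ∃ c₂ > (0:ℝ), ∀ r R : ℝ,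
    0 < r → r ≤ R ^ (1 + Φ R) → R ^ (1 + Φ R) ≤ R → R < c₁ → ∀ z ∈ E,
      ENNReal.ofReal (c₂ * (R / r) ^ α) ≤ coverNumber r (closedBall z R ∩ E)}

variable {M : ℕ} {Φ : ℝ → ℝ} {E : Set X}

lemma ball_cover_bound (hM : 1 ≤ M)
    (hd : ∀ (x : X) (R : ℝ), ∃ s : Finset X, s.card ≤ M ∧
      closedBall x R ⊆ ⋃ y ∈ s, closedBall y (R / 2))
    (z : X) {r R : ℝ} (h0 : 0 < r) (hrR : r ≤ R) (A : Set X) :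
    coverNumber r (closedBall z R ∩ A) ≤
      ENNReal.ofReal ((M:ℝ) * (R / r) ^ Real.logb 2 M) := by
  have hs : closedBall z R ⊆ ⋃ x ∈ ({z} : Finset X), closedBall x R := by simp
  have := cover_refine hM hd h0 hrR (closedBall z R) {z} hs
  simpa using (coverNumber_mono (Set.inter_subset_left)).trans this

lemma logb_mem_USet (hM : 1 ≤ M)
    (hd : ∀ (x : X) (R : ℝ), ∃ s : Finset X, s.card ≤ M ∧
      closedBall x R ⊆ ⋃ y ∈ s, closedBall y (R / 2)) :
    Real.logb 2 M ∈ USet Φ E := by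
  refine ⟨1, one_pos, M, by exact_mod_cast hM, fun r R h0 h1 h2 _ z _ => ?_⟩
  exact ball_cover_bound hM hd z h0 (h1.trans h2) E

/-- A convenient admissible radius `R` below a bound `c₁`. -/
lemma exists_good_R (hΦ : ∀ x ∈ Ioo (0:ℝ) 1, 0 ≤ Φ x) {c₁ : ℝ} (hc₁ : 0 < c₁) :
    ∃ R : ℝ, 0 < R ∧ R < 1 ∧ R < c₁ ∧ R ^ (1 + Φ R) ≤ R ∧ 0 < R ^ (1 + Φ R) := by
  set R := min c₁ 1 / 2 with hRdef
  have hmin1 : min c₁ 1 ≤ 1 := min_le_right _ _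
  have hminc : min c₁ 1 ≤ c₁ := min_le_left _ _
  have hmin0 : 0 < min c₁ 1 := lt_min hc₁ one_pos
  have hR0 : 0 < R := by positivity
  have hR1 : R < 1 := by rw [hRdef]; linarith
  have hRc : R < c₁ := by rw [hRdef]; linarith
  have hle : R ^ (1 + Φ R) ≤ R := by
    have := Real.rpow_le_rpow_of_exponent_ge hR0 hR1.le
      (by linarith [hΦ R ⟨hR0, hR1⟩] : (1:ℝ) ≤ 1 + Φ R)
    simpa using this
  exact ⟨R, hR0, hR1, hRc, hle, Real.rpow_pos_of_pos hR0 _⟩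

lemma mem_inter_self {z : X} {R : ℝ} (hR : 0 ≤ R) (hz : z ∈ E) :
    z ∈ closedBall z R ∩ E := ⟨by simpa using hR, hz⟩

lemma USet_nonneg (hE : E.Nonempty) (hΦ : ∀ x ∈ Ioo (0:ℝ) 1, 0 ≤ Φ x)
    {α : ℝ} (hα : α ∈ USet Φ E) : 0 ≤ α := by
  by_contra hneg
  push_neg at hneg
  obtain ⟨c₁, hc₁, c₂, hc₂, h⟩ := hα
  obtain ⟨R, hR0, hR1, hRc, hRle, hRpow⟩ := exists_good_R hΦ hc₁
  obtain ⟨z, hz⟩ := hE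
  -- choose q large so that c₂ * q ^ α < 1
  have htend : Tendsto (fun x : ℝ => x ^ α) atTop (nhds 0) := by
    have := tendsto_rpow_neg_atTop (y := -α) (by linarith)
    simpa using this
  have hev : ∀ᶠ x in atTop, x ^ α < 1 / c₂ :=
    htend.eventually_lt_const (by positivity)
  obtain ⟨q₀, hq₀⟩ := hev.exists_forall_of_atTop
  set q := max q₀ 1 with hq
  have hq1 : (1:ℝ) ≤ q := le_max_right _ _
  have hq0 : (0:ℝ) < q := lt_of_lt_of_le one_pos hq1
  set r := min (R ^ (1 + Φ R)) (R / q) with hr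
  have hr0 : 0 < r := lt_min hRpow (by positivity)
  have hrpow : r ≤ R ^ (1 + Φ R) := min_le_left _ _
  have hbound := h r R hr0 hrpow hRle hRc z hz
  have hone : (1:ℝ≥0∞) ≤ coverNumber r (closedBall z R ∩ E) :=
    one_le_coverNumber ⟨z, mem_inter_self hR0.le hz⟩
  have h1 : (1:ℝ≥0∞) ≤ ENNReal.ofReal (c₂ * (R / r) ^ α) := hone.trans hbound
  have h2 : (1:ℝ) ≤ c₂ * (R / r) ^ α := by
    rwa [ENNReal.one_le_ofReal] at h1
  -- but R / r ≥ q, so c₂ * (R/r)^α ≤ c₂ * q^α < 1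
  have hRr : q ≤ R / r := by
    rw [le_div_iff₀ hr0]
    calc q * r ≤ q * (R / q) := mul_le_mul_of_nonneg_left (min_le_right _ _) hq0.le
      _ = R := by field_simp
  have h3 : (R / r) ^ α ≤ q ^ α :=
    Real.rpow_le_rpow_of_nonpos hq0 hRr hneg.le
  have h4 : q ^ α < 1 / c₂ := hq₀ q (le_max_left _ _)
  have h5 : c₂ * (R / r) ^ α ≤ c₂ * q ^ α := mul_le_mul_of_nonneg_left h3 hc₂.le
  have h6 : c₂ * q ^ α < c₂ * (1 / c₂) := mul_lt_mul_of_pos_left h4 hc₂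
  have h7 : c₂ * (1 / c₂) = 1 := by field_simp
  linarith

end PhiAux

namespace PhiAux
variable {X : Type*} [PseudoMetricSpace X] {M : ℕ} {Φ : ℝ → ℝ} {E : Set X}

lemma zero_mem_TSet (hE : E.Nonempty) : (0:ℝ) ∈ TSet Φ E := by
  refine ⟨1, one_pos, 1, one_pos, fun r R h0 h1 h2 _ z hz => ?_⟩
  have hR0 : (0:ℝ) ≤ R := le_trans (le_trans h0.le h1) h2
  have : ENNReal.ofReal (1 * (R / r) ^ (0:ℝ)) = 1 := by
    rw [Real.rpow_zero]; simp
  rw [this]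
  exact one_le_coverNumber ⟨z, mem_inter_self hR0 hz⟩

lemma TSet_le_logb (hE : E.Nonempty) (hΦ : ∀ x ∈ Ioo (0:ℝ) 1, 0 ≤ Φ x)
    (hM : 1 ≤ M)
    (hd : ∀ (x : X) (R : ℝ), ∃ s : Finset X, s.card ≤ M ∧
      closedBall x R ⊆ ⋃ y ∈ s, closedBall y (R / 2))
    {α : ℝ} (hα : α ∈ TSet Φ E) : α ≤ Real.logb 2 M := by
  set α₀ := Real.logb 2 M with hα₀
  by_contra hgt
  push_neg at hgt
  obtain ⟨c₁, hc₁, c₂, hc₂, h⟩ := hα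
  obtain ⟨R, hR0, hR1, hRc, hRle, hRpow⟩ := exists_good_R hΦ hc₁
  obtain ⟨z, hz⟩ := hE
  have hM0 : (0:ℝ) < M := by exact_mod_cast Nat.lt_of_lt_of_le Nat.zero_lt_one hM
  have htend : Tendsto (fun x : ℝ => x ^ (α - α₀)) atTop atTop :=
    tendsto_rpow_atTop (by linarith)
  have hev : ∀ᶠ x in atTop, (M:ℝ) / c₂ < x ^ (α - α₀) :=
    htend.eventually_gt_atTop _
  obtain ⟨q₀, hq₀⟩ := hev.exists_forall_of_atTop
  set q := max q₀ 1 with hq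
  have hq1 : (1:ℝ) ≤ q := le_max_right _ _
  have hq0 : (0:ℝ) < q := lt_of_lt_of_le one_pos hq1
  set r := min (R ^ (1 + Φ R)) (R / q) with hr
  have hr0 : 0 < r := lt_min hRpow (by positivity)
  have hrpow : r ≤ R ^ (1 + Φ R) := min_le_left _ _
  have hrR : r ≤ R := hrpow.trans hRle
  have hlow := h r R hr0 hrpow hRle hRc z hz
  have hupp := ball_cover_bound hM hd z hr0 hrR E
  have hcomb : c₂ * (R / r) ^ α ≤ (M:ℝ) * (R / r) ^ α₀ := by
    have := hlow.trans hupp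
    rwa [ENNReal.ofReal_le_ofReal_iff (by positivity)] at this
  have hRr : q ≤ R / r := by
    rw [le_div_iff₀ hr0]
    calc q * r ≤ q * (R / q) := mul_le_mul_of_nonneg_left (min_le_right _ _) hq0.le
      _ = R := by field_simp
  have hx0 : (0:ℝ) < R / r := by positivity
  have hsplit : (R / r) ^ α = (R / r) ^ α₀ * (R / r) ^ (α - α₀) := by
    rw [← Real.rpow_add hx0]; ring_nf
  have hbig : (M:ℝ) / c₂ < (R / r) ^ (α - α₀) :=
    hq₀ _ (le_trans (le_max_left _ _) hRr)
  -- contradiction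
  have hpow0 : (0:ℝ) < (R / r) ^ α₀ := Real.rpow_pos_of_pos hx0 _
  rw [hsplit, ← mul_assoc] at hcomb
  have h6 : c₂ * (R / r) ^ (α - α₀) ≤ (M:ℝ) := by
    have := (mul_le_mul_iff_of_pos_right hpow0).1 (by linarith [hcomb] : c₂ * (R / r) ^ (α - α₀) * (R / r) ^ α₀ ≤ (M:ℝ) * (R / r) ^ α₀)
    exact this
  have h7 : (M:ℝ) / c₂ < (M:ℝ) / c₂ := by
    calc (M:ℝ) / c₂ < (R / r) ^ (α - α₀) := hbig
      _ ≤ (M:ℝ) / c₂ := by rw [le_div_iff₀ hc₂]; linarith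
  exact lt_irrefl _ h7

end PhiAux

namespace PhiAux
variable {X : Type*} [PseudoMetricSpace X] {M : ℕ} {E : Set X}

lemma key_ratio {Φ₁ Φ₂ : ℝ → ℝ} {ε r R : ℝ} (hε : 0 ≤ ε) (hR0 : 0 < R)
    (hR1 : R < 1) (h0r : 0 < r) (hr2 : r ≤ R ^ (1 + Φ₂ R))
    (hcmp : Φ₁ R ≤ (1 + ε) * Φ₂ R) :
    r / R ^ (1 + Φ₁ R) ≤ (R / r) ^ ε := by
  have hp1 : (0:ℝ) < R ^ (1 + Φ₁ R) := Real.rpow_pos_of_pos hR0 _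
  have hp2 : (0:ℝ) < R ^ (1 + Φ₂ R) := Real.rpow_pos_of_pos hR0 _
  have hp3 : (0:ℝ) < R ^ (-Φ₂ R) := Real.rpow_pos_of_pos hR0 _
  have step1 : r / R ^ (1 + Φ₁ R) ≤ R ^ (Φ₂ R - Φ₁ R) := by
    have h := (div_le_div_iff_of_pos_right hp1).2 hr2
    have e : R ^ (1 + Φ₂ R) / R ^ (1 + Φ₁ R) = R ^ (Φ₂ R - Φ₁ R) := by
      rw [← Real.rpow_sub hR0]; ring_nf
    rwa [e] at h
  have step2 : R ^ (Φ₂ R - Φ₁ R) ≤ R ^ ((-Φ₂ R) * ε) :=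
    Real.rpow_le_rpow_of_exponent_ge hR0 hR1.le (by nlinarith)
  have step3 : R ^ ((-Φ₂ R) * ε) = (R ^ (-Φ₂ R)) ^ ε := Real.rpow_mul hR0.le _ _
  have step4 : R ^ (-Φ₂ R) ≤ R / r := by
    rw [le_div_iff₀ h0r]
    calc R ^ (-Φ₂ R) * r ≤ R ^ (-Φ₂ R) * R ^ (1 + Φ₂ R) :=
          mul_le_mul_of_nonneg_left hr2 hp3.le
      _ = R := by rw [← Real.rpow_add hR0]; norm_num
  have step5 : (R ^ (-Φ₂ R)) ^ ε ≤ (R / r) ^ ε :=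
    Real.rpow_le_rpow hp3.le step4 hε
  calc r / R ^ (1 + Φ₁ R) ≤ R ^ (Φ₂ R - Φ₁ R) := step1
    _ ≤ R ^ ((-Φ₂ R) * ε) := step2
    _ = (R ^ (-Φ₂ R)) ^ ε := step3
    _ ≤ (R / r) ^ ε := step5

end PhiAux

namespace PhiAux
variable {X : Type*} [PseudoMetricSpace X] {M : ℕ} {E : Set X}

lemma USet_transfer {Φ₁ Φ₂ : ℝ → ℝ} (h₁nn : ∀ x ∈ Ioo (0:ℝ) 1, 0 ≤ Φ₁ x)
    {ε δ : ℝ} (hε0 : 0 < ε) (hδ : 0 < δ)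
    (hcomp : ∀ x ∈ Ioo (0:ℝ) 1, x < δ → Φ₁ x ≤ (1 + ε) * Φ₂ x)
    {α : ℝ} (hα0 : 0 ≤ α) (hα : α ∈ USet Φ₁ E) :
    α * (1 + ε) ∈ USet (X := X) Φ₂ E := by
  obtain ⟨c₁, hc₁, c₂, hc₂, h⟩ := hα
  refine ⟨min c₁ (min δ 1), by positivity, c₂, hc₂, fun r R h0r hr2 hR2 hRc z hz => ?_⟩
  have hR0 : 0 < R := lt_of_lt_of_le (lt_of_lt_of_le h0r hr2) hR2
  have hR1 : R < 1 := lt_of_lt_of_le hRc ((min_le_right _ _).trans (min_le_right _ _))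
  have hRδ : R < δ := lt_of_lt_of_le hRc ((min_le_right _ _).trans (min_le_left _ _))
  have hRc₁ : R < c₁ := lt_of_lt_of_le hRc (min_le_left _ _)
  have hcmp := hcomp R ⟨hR0, hR1⟩ hRδ
  have hΦ₁le : R ^ (1 + Φ₁ R) ≤ R := by
    have := Real.rpow_le_rpow_of_exponent_ge hR0 hR1.le
      (by linarith [h₁nn R ⟨hR0, hR1⟩] : (1:ℝ) ≤ 1 + Φ₁ R)
    simpa using this
  have hrR : r ≤ R := hr2.trans hR2
  have hx1 : (1:ℝ) ≤ R / r := (one_le_div h0r).2 hrR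
  have hx0 : (0:ℝ) < R / r := by positivity
  rcases le_or_gt r (R ^ (1 + Φ₁ R)) with hcase | hcase
  · -- easy case: (r, R) is Φ₁-admissible
    refine (h r R h0r hcase hΦ₁le hRc₁ z hz).trans (ENNReal.ofReal_le_ofReal ?_)
    have : (R / r) ^ α ≤ (R / r) ^ (α * (1 + ε)) :=
      Real.rpow_le_rpow_of_exponent_le hx1 (by nlinarith)
    exact mul_le_mul_of_nonneg_left this hc₂.le
  · -- hard case: replace r by r' = R ^ (1 + Φ₁ R)
    set r' := R ^ (1 + Φ₁ R) with hr'def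
    have hr'0 : 0 < r' := Real.rpow_pos_of_pos hR0 _
    have h1 : coverNumber r (closedBall z R ∩ E) ≤
        coverNumber r' (closedBall z R ∩ E) := coverNumber_anti hcase.le _
    have h2 := h r' R hr'0 le_rfl hΦ₁le hRc₁ z hz
    refine (h1.trans h2).trans (ENNReal.ofReal_le_ofReal ?_)
    refine mul_le_mul_of_nonneg_left ?_ hc₂.le
    have hkey : r / r' ≤ (R / r) ^ ε := key_ratio hε0.le hR0 hR1 h0r hr2 hcmp
    have hsplit : R / r' = (R / r) * (r / r') := by field_simp
    have hb1 : (0:ℝ) ≤ r / r' := by positivity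
    calc (R / r') ^ α = (R / r) ^ α * (r / r') ^ α := by
          rw [hsplit, Real.mul_rpow hx0.le hb1]
      _ ≤ (R / r) ^ α * ((R / r) ^ ε) ^ α := by
          refine mul_le_mul_of_nonneg_left (Real.rpow_le_rpow hb1 hkey hα0) ?_
          positivity
      _ = (R / r) ^ (α * (1 + ε)) := by
          rw [← Real.rpow_mul hx0.le, ← Real.rpow_add hx0]
          ring_nf

lemma TSet_transfer {Φ₁ Φ₂ : ℝ → ℝ} (h₁nn : ∀ x ∈ Ioo (0:ℝ) 1, 0 ≤ Φ₁ x)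
    (hM : 1 ≤ M)
    (hd : ∀ (x : X) (R : ℝ), ∃ s : Finset X, s.card ≤ M ∧
      closedBall x R ⊆ ⋃ y ∈ s, closedBall y (R / 2))
    {ε δ : ℝ} (hε0 : 0 < ε) (hδ : 0 < δ)
    (hcomp : ∀ x ∈ Ioo (0:ℝ) 1, x < δ → Φ₁ x ≤ (1 + ε) * Φ₂ x)
    {α : ℝ} (hα0 : 0 ≤ α) (hαle : α ≤ Real.logb 2 M) (hα : α ∈ TSet Φ₁ E) :
    α - ε * Real.logb 2 M ∈ TSet (X := X) Φ₂ E := by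
  set α₀ := Real.logb 2 M with hα₀def
  have hα₀0 : 0 ≤ α₀ := Real.logb_nonneg one_lt_two (by exact_mod_cast hM)
  have hM0 : (0:ℝ) < M := by exact_mod_cast Nat.lt_of_lt_of_le Nat.zero_lt_one hM
  have hM1 : (1:ℝ) ≤ M := by exact_mod_cast hM
  obtain ⟨c₁, hc₁, c₂, hc₂, h⟩ := hα
  refine ⟨min c₁ (min δ 1), by positivity, c₂ / M, by positivity,
    fun r R h0r hr2 hR2 hRc z hz => ?_⟩
  have hR0 : 0 < R := lt_of_lt_of_le (lt_of_lt_of_le h0r hr2) hR2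
  have hR1 : R < 1 := lt_of_lt_of_le hRc ((min_le_right _ _).trans (min_le_right _ _))
  have hRδ : R < δ := lt_of_lt_of_le hRc ((min_le_right _ _).trans (min_le_left _ _))
  have hRc₁ : R < c₁ := lt_of_lt_of_le hRc (min_le_left _ _)
  have hcmp := hcomp R ⟨hR0, hR1⟩ hRδ
  have hΦ₁le : R ^ (1 + Φ₁ R) ≤ R := by
    have := Real.rpow_le_rpow_of_exponent_ge hR0 hR1.le
      (by linarith [h₁nn R ⟨hR0, hR1⟩] : (1:ℝ) ≤ 1 + Φ₁ R)
    simpa using this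
  have hrR : r ≤ R := hr2.trans hR2
  have hx1 : (1:ℝ) ≤ R / r := (one_le_div h0r).2 hrR
  have hx0 : (0:ℝ) < R / r := by positivity
  rcases le_or_gt r (R ^ (1 + Φ₁ R)) with hcase | hcase
  · -- easy case
    refine le_trans (ENNReal.ofReal_le_ofReal ?_) (h r R h0r hcase hΦ₁le hRc₁ z hz)
    have e1 : (R / r) ^ (α - ε * α₀) ≤ (R / r) ^ α :=
      Real.rpow_le_rpow_of_exponent_le hx1 (by nlinarith)
    have e2 : c₂ / M ≤ c₂ := by
      rw [div_le_iff₀ hM0]; nlinarith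
    have e3 : (0:ℝ) ≤ (R / r) ^ (α - ε * α₀) := by positivity
    calc c₂ / M * (R / r) ^ (α - ε * α₀) ≤ c₂ * (R / r) ^ (α - ε * α₀) :=
          mul_le_mul_of_nonneg_right e2 e3
      _ ≤ c₂ * (R / r) ^ α := mul_le_mul_of_nonneg_left e1 hc₂.le
  · -- hard case
    set r'' := R ^ (1 + Φ₁ R) with hr''def
    have hr''0 : 0 < r'' := Real.rpow_pos_of_pos hR0 _
    have hkey : r / r'' ≤ (R / r) ^ ε := key_ratio hε0.le hR0 hR1 h0r hr2 hcmp
    -- show the bound against every cover by `r`-balls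
    refine le_iInf₂ fun s hs => ?_
    have href := cover_refine hM hd hr''0 hcase.le (closedBall z R ∩ E) s hs
    have hlow := h r'' R hr''0 le_rfl hΦ₁le hRc₁ z hz
    have hchain : ENNReal.ofReal (c₂ * (R / r'') ^ α) ≤
        (s.card : ℝ≥0∞) * ENNReal.ofReal ((M:ℝ) * (r / r'') ^ α₀) :=
      hlow.trans href
    -- real-number inequality
    have hreal : c₂ / M * (R / r) ^ (α - ε * α₀) * ((M:ℝ) * (r / r'') ^ α₀) ≤
        c₂ * (R / r'') ^ α := by
      have hb1 : (0:ℝ) < r / r'' := by positivity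
      have hb2 : (0:ℝ) < (R / r) ^ ε := by positivity
      have e1 : (R / r'') ^ α = (R / r) ^ α * (r / r'') ^ α := by
        rw [← Real.mul_rpow hx0.le hb1.le]
        congr 1
        field_simp
      have e2 : ((R / r) ^ ε) ^ (α - α₀) ≤ (r / r'') ^ (α - α₀) :=
        Real.rpow_le_rpow_of_nonpos hb1 hkey (by linarith)
      have e3 : ((R / r) ^ ε) ^ (α - α₀) = (R / r) ^ (ε * (α - α₀)) := by
        rw [← Real.rpow_mul hx0.le]
      have e4 : (R / r) ^ (α - ε * α₀) ≤ (R / r) ^ (α + ε * (α - α₀)) :=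
        Real.rpow_le_rpow_of_exponent_le hx1 (by nlinarith)
      have e5 : (R / r) ^ (α + ε * (α - α₀)) = (R / r) ^ α * (R / r) ^ (ε * (α - α₀)) :=
        Real.rpow_add hx0 _ _
      -- assemble
      have e6 : (R / r) ^ (α - ε * α₀) * (r / r'') ^ α₀ ≤ (R / r'') ^ α := by
        calc (R / r) ^ (α - ε * α₀) * (r / r'') ^ α₀
            ≤ (R / r) ^ α * (R / r) ^ (ε * (α - α₀)) * (r / r'') ^ α₀ := by
              refine mul_le_mul_of_nonneg_right (e4.trans_eq e5) (by positivity)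
          _ ≤ (R / r) ^ α * (r / r'') ^ (α - α₀) * (r / r'') ^ α₀ := by
              refine mul_le_mul_of_nonneg_right
                (mul_le_mul_of_nonneg_left (e3 ▸ e2) (by positivity)) (by positivity)
          _ = (R / r) ^ α * (r / r'') ^ α := by
              rw [mul_assoc, ← Real.rpow_add hb1]; ring_nf
          _ = (R / r'') ^ α := e1.symm
      calc c₂ / M * (R / r) ^ (α - ε * α₀) * ((M:ℝ) * (r / r'') ^ α₀)
          = c₂ * ((R / r) ^ (α - ε * α₀) * (r / r'') ^ α₀) := by field_simp
        _ ≤ c₂ * (R / r'') ^ α := mul_le_mul_of_nonneg_left e6 hc₂.le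
    -- transfer to ℝ≥0∞ and cancel
    have hpos : (0:ℝ) < (M:ℝ) * (r / r'') ^ α₀ := by positivity
    have hofr : ENNReal.ofReal (c₂ / M * (R / r) ^ (α - ε * α₀)) *
        ENNReal.ofReal ((M:ℝ) * (r / r'') ^ α₀) ≤
        (s.card : ℝ≥0∞) * ENNReal.ofReal ((M:ℝ) * (r / r'') ^ α₀) := by
      rw [← ENNReal.ofReal_mul (by positivity)]
      exact (ENNReal.ofReal_le_ofReal hreal).trans hchain
    have hne0 : ENNReal.ofReal ((M:ℝ) * (r / r'') ^ α₀) ≠ 0 := by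
      exact (ENNReal.ofReal_pos.2 hpos).ne'
    have hnetop : ENNReal.ofReal ((M:ℝ) * (r / r'') ^ α₀) ≠ ⊤ := ENNReal.ofReal_ne_top
    exact (ENNReal.mul_le_mul_iff_left hne0 hnetop).1 hofr

end PhiAux

namespace PhiAux

lemma ratio_bound {Φ₁ Φ₂ : ℝ → ℝ} (h₂nn : ∀ x ∈ Ioo (0:ℝ) 1, 0 ≤ Φ₂ x)
    (hratio : Tendsto (fun x => Φ₁ x / Φ₂ x) (nhdsWithin 0 (Ioo 0 1)) (nhds 1))
    {ε : ℝ} (hε0 : 0 < ε) (hε1 : ε < 1) :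
    ∃ δ > (0:ℝ), ∀ x ∈ Ioo (0:ℝ) 1, x < δ → Φ₁ x ≤ (1 + ε) * Φ₂ x := by
  have hev : ∀ᶠ x in nhdsWithin (0:ℝ) (Ioo 0 1), dist (Φ₁ x / Φ₂ x) 1 < ε :=
    Metric.tendsto_nhds.1 hratio ε hε0
  rw [Filter.eventually_iff, Metric.mem_nhdsWithin_iff] at hev
  obtain ⟨δ, hδ0, hδ⟩ := hev
  refine ⟨δ, hδ0, fun x hx hxδ => ?_⟩
  have hdx : x ∈ Metric.ball (0:ℝ) δ := by
    rw [Metric.mem_ball, Real.dist_eq, sub_zero, abs_of_pos hx.1]; exact hxδ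
  have h : dist (Φ₁ x / Φ₂ x) 1 < ε := hδ ⟨hdx, hx⟩
  rw [Real.dist_eq] at h
  have h2 : Φ₂ x ≠ 0 := by
    intro h0
    rw [h0, div_zero] at h
    simp only [zero_sub, abs_neg, abs_one] at h
    linarith
  have h2pos : 0 < Φ₂ x := lt_of_le_of_ne (h₂nn x hx) (Ne.symm h2)
  have := abs_lt.1 h
  have h3 : Φ₁ x / Φ₂ x < 1 + ε := by linarith [this.2]
  calc Φ₁ x = Φ₁ x / Φ₂ x * Φ₂ x := by field_simp
    _ ≤ (1 + ε) * Φ₂ x := mul_le_mul_of_nonneg_right h3.le h2pos.le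

variable {X : Type*} [PseudoMetricSpace X] {M : ℕ} {E : Set X}

lemma sInf_USet_le {Φ₁ Φ₂ : ℝ → ℝ} (hM : 1 ≤ M)
    (hd : ∀ (x : X) (R : ℝ), ∃ s : Finset X, s.card ≤ M ∧
      closedBall x R ⊆ ⋃ y ∈ s, closedBall y (R / 2))
    (hE : E.Nonempty)
    (h₁nn : ∀ x ∈ Ioo (0:ℝ) 1, 0 ≤ Φ₁ x) (h₂nn : ∀ x ∈ Ioo (0:ℝ) 1, 0 ≤ Φ₂ x)
    (hratio : Tendsto (fun x => Φ₁ x / Φ₂ x) (nhdsWithin 0 (Ioo 0 1)) (nhds 1)) :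
    sInf (USet (X := X) Φ₂ E) ≤ sInf (USet (X := X) Φ₁ E) := by
  have hne₁ : (USet (X := X) Φ₁ E).Nonempty := ⟨_, logb_mem_USet hM hd⟩
  have hbdd₂ : BddBelow (USet (X := X) Φ₂ E) :=
    ⟨0, fun α hα => USet_nonneg hE h₂nn hα⟩
  set I := sInf (USet (X := X) Φ₁ E) with hIdef
  have hI0 : 0 ≤ I := le_csInf hne₁ fun α hα => USet_nonneg hE h₁nn hα
  refine le_of_forall_pos_le_add fun η hη => ?_
  set ε := min (η / (I + 1)) (1/2) with hεdef
  have hε0 : 0 < ε := lt_min (by positivity) (by norm_num)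
  have hε1 : ε < 1 := lt_of_le_of_lt (min_le_right _ _) (by norm_num)
  obtain ⟨δ, hδ0, hcomp⟩ := ratio_bound h₂nn hratio hε0 hε1
  have step : ∀ α ∈ USet (X := X) Φ₁ E, sInf (USet (X := X) Φ₂ E) ≤ α * (1 + ε) :=
    fun α hα => csInf_le hbdd₂
      (USet_transfer h₁nn hε0 hδ0 hcomp (USet_nonneg hE h₁nn hα) hα)
  have step2 : sInf (USet (X := X) Φ₂ E) ≤ (1 + ε) * I := by
    have hpos : (0:ℝ) < 1 + ε := by linarith
    have h : sInf (USet (X := X) Φ₂ E) / (1 + ε) ≤ I := by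
      refine le_csInf hne₁ fun α hα => ?_
      rw [div_le_iff₀ hpos]
      exact step α hα
    rw [div_le_iff₀ hpos] at h
    linarith
  have hεI : ε * I ≤ η := by
    have h1 : ε ≤ η / (I + 1) := min_le_left _ _
    have h2 : ε * (I + 1) ≤ η := by
      rw [← le_div_iff₀ (by linarith : (0:ℝ) < I + 1)]; exact h1
    nlinarith
  linarith

lemma sSup_TSet_le {Φ₁ Φ₂ : ℝ → ℝ} (hM : 1 ≤ M)
    (hd : ∀ (x : X) (R : ℝ), ∃ s : Finset X, s.card ≤ M ∧
      closedBall x R ⊆ ⋃ y ∈ s, closedBall y (R / 2))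
    (hE : E.Nonempty)
    (h₁nn : ∀ x ∈ Ioo (0:ℝ) 1, 0 ≤ Φ₁ x) (h₂nn : ∀ x ∈ Ioo (0:ℝ) 1, 0 ≤ Φ₂ x)
    (hratio : Tendsto (fun x => Φ₁ x / Φ₂ x) (nhdsWithin 0 (Ioo 0 1)) (nhds 1)) :
    sSup (TSet (X := X) Φ₁ E) ≤ sSup (TSet (X := X) Φ₂ E) := by
  set α₀ := Real.logb 2 M with hα₀def
  have hα₀0 : 0 ≤ α₀ := Real.logb_nonneg one_lt_two (by exact_mod_cast hM)
  have hne₁ : (TSet (X := X) Φ₁ E).Nonempty := ⟨0, zero_mem_TSet hE⟩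
  have hbdd₂ : BddAbove (TSet (X := X) Φ₂ E) :=
    ⟨α₀, fun α hα => TSet_le_logb hE h₂nn hM hd hα⟩
  have hS0 : 0 ≤ sSup (TSet (X := X) Φ₂ E) := le_csSup hbdd₂ (zero_mem_TSet hE)
  refine le_of_forall_pos_le_add fun η hη => ?_
  set ε := min (η / (α₀ + 1)) (1/2) with hεdef
  have hε0 : 0 < ε := lt_min (by positivity) (by norm_num)
  have hε1 : ε < 1 := lt_of_le_of_lt (min_le_right _ _) (by norm_num)
  obtain ⟨δ, hδ0, hcomp⟩ := ratio_bound h₂nn hratio hε0 hε1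
  have hεα₀ : ε * α₀ ≤ η := by
    have h1 : ε ≤ η / (α₀ + 1) := min_le_left _ _
    have h2 : ε * (α₀ + 1) ≤ η := by
      rw [← le_div_iff₀ (by linarith : (0:ℝ) < α₀ + 1)]; exact h1
    nlinarith
  refine csSup_le hne₁ fun α hα => ?_
  rcases le_or_gt α 0 with hα0 | hα0
  · linarith
  · have hαle : α ≤ α₀ := TSet_le_logb hE h₁nn hM hd hα
    have hmem := TSet_transfer h₁nn hM hd hε0 hδ0 hcomp hα0.le hαle hα
    have := le_csSup hbdd₂ hmem
    linarith

end PhiAux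

/-- If `Φ₁ / Φ₂ → 1` at `0` then the `Φ₁`- and `Φ₂`-dimensions agree for every set. -/
theorem phiDim_eq_of_ratio_tendsto_one {X : Type*} [MetricSpace X]
    (hX : IsDoublingSpace X) (Φ₁ Φ₂ : ℝ → ℝ)
    (h₁ : IsDimensionFunction Φ₁) (h₂ : IsDimensionFunction Φ₂)
    (hratio : Tendsto (fun x => Φ₁ x / Φ₂ x) (nhdsWithin 0 (Ioo 0 1)) (nhds 1))
    (E : Set X) :
    upperPhiDim Φ₁ E = upperPhiDim Φ₂ E ∧ lowerPhiDim Φ₁ E = lowerPhiDim Φ₂ E := by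
  classical
  obtain ⟨M, hM, hd⟩ := hX
  have h₁nn := h₁.1
  have h₂nn := h₂.1
  have e₁ : ∀ Φ : ℝ → ℝ, upperPhiDim Φ E = sInf (PhiAux.USet (X := X) Φ E) :=
    fun _ => rfl
  have e₂ : ∀ Φ : ℝ → ℝ, lowerPhiDim Φ E = sSup (PhiAux.TSet (X := X) Φ E) :=
    fun _ => rfl
  rcases E.eq_empty_or_nonempty with hE | hE
  · subst hE
    have hU : ∀ Φ : ℝ → ℝ, PhiAux.USet (X := X) Φ (∅ : Set X) = Set.univ := by
      intro Φ
      refine Set.eq_univ_of_forall fun α => ?_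
      exact ⟨1, one_pos, 1, one_pos, fun r R _ _ _ _ z hz => absurd hz (Set.notMem_empty z)⟩
    have hT : ∀ Φ : ℝ → ℝ, PhiAux.TSet (X := X) Φ (∅ : Set X) = Set.univ := by
      intro Φ
      refine Set.eq_univ_of_forall fun α => ?_
      exact ⟨1, one_pos, 1, one_pos, fun r R _ _ _ _ z hz => absurd hz (Set.notMem_empty z)⟩
    refine ⟨?_, ?_⟩
    · rw [e₁ Φ₁, e₁ Φ₂, hU Φ₁, hU Φ₂]
    · rw [e₂ Φ₁, e₂ Φ₂, hT Φ₁, hT Φ₂]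
  · have hratio' : Tendsto (fun x => Φ₂ x / Φ₁ x) (nhdsWithin 0 (Ioo 0 1)) (nhds 1) := by
      have h := hratio.inv₀ one_ne_zero
      simpa [inv_div] using h
    refine ⟨?_, ?_⟩
    · rw [e₁ Φ₁, e₁ Φ₂]
      exact le_antisymm (PhiAux.sInf_USet_le hM hd hE h₂nn h₁nn hratio')
        (PhiAux.sInf_USet_le hM hd hE h₁nn h₂nn hratio)
    · rw [e₂ Φ₁, e₂ Φ₂]
      exact le_antisymm (PhiAux.sSup_TSet_le hM hd hE h₁nn h₂nn hratio)
        (PhiAux.sSup_TSet_le hM hd hE h₂nn h₁nn hratio')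

end
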